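/- Under the matrix representation Ψ_J, the antipode is represented by the inverse of the coproduct matrix: Ψ_J[S] = M⁻¹, and since M − 1 is strictly lower triangular (nilpotent for finite size), M⁻¹ = 1 + Σ_{k>0} (−1)^k (M − 1)^k. -/

import Mathlib

open TensorProduct

set_option synthInstance.maxHeartbeats 800000 in
/-- Under the matrix representation, the antipode is represented by the inverse of
the (unipotent lower triangular) coproduct matrix: `Ψ_J[S] · M = M · Ψ_J[S] = 1`,
and `Ψ_J[S] = M⁻¹ = 1 + Σ_{l>0} (−1)^l (M − 1)^l` (a finite sum by nilpotency). -/
theorem antipode_matrix_is_inverse_of_coproduct_matrix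
    (k H : Type*) [Field k] [CharZero k] [CommRing H] [HopfAlgebra k H]
    (m : ℕ) (x : Fin m → H)
    (hind : LinearIndependent k x)
    (M : Matrix (Fin m) (Fin m) H)
    (hM : ∀ i : Fin m, Coalgebra.comul (R := k) (x i) = ∑ j, M i j ⊗ₜ[k] x j)
    (hdiag : ∀ i : Fin m, M i i = 1)
    (htri : ∀ i j : Fin m, i < j → M i j = 0) :
    (Matrix.of fun i j => HopfAlgebra.antipode (R := k) (M i j)) * M = 1 ∧
    M * (Matrix.of fun i j => HopfAlgebra.antipode (R := k) (M i j)) = 1 ∧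
    (Matrix.of fun i j => HopfAlgebra.antipode (R := k) (M i j))
      = 1 + ∑ l ∈ Finset.Ico 1 m, ((-1 : H) ^ l) • (M - 1) ^ l := by
  classical
  -- dual functionals for the linearly independent family x
  obtain ⟨φ, hφ⟩ : ∃ φ : Fin m → (H →ₗ[k] k),
      ∀ j i, φ j (x i) = if i = j then 1 else 0 := by
    let b := Module.Basis.span hind
    choose g hg using fun j => LinearMap.exists_extend ((b.coord j))
    refine ⟨g, fun j i => ?_⟩
    have hx : x i = ((b i : Submodule.span k (Set.range x)) : H) :=
      (congrArg Subtype.val (Module.Basis.span_apply hind i)).symm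
    rw [hx]
    have := LinearMap.congr_fun (hg j) (b i)
    simp only [LinearMap.comp_apply, Submodule.subtype_apply] at this
    rw [this, Module.Basis.coord_apply, Module.Basis.repr_self, Finsupp.single_apply]
  -- extraction lemma in (H ⊗ H) ⊗ H
  have hext : ∀ (t : Fin m → (H ⊗[k] H)),
      (∑ i, t i ⊗ₜ[k] x i = 0) → ∀ j, t j = 0 := by
    intro t ht j
    have h := congrArg (fun z =>
      (TensorProduct.rid k (H ⊗[k] H)) ((LinearMap.lTensor (H ⊗[k] H) (φ j)) z)) ht
    simpa [map_sum, hφ, ite_smul, Finset.sum_ite_eq'] using h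
  -- counit of M is the identity matrix
  have hcounit : ∀ i j : Fin m,
      Coalgebra.counit (R := k) (M i j) = if i = j then 1 else 0 := by
    intro i j
    have h := Coalgebra.rTensor_counit_comul (R := k) (x i)
    rw [hM i] at h
    have h' := congrArg (TensorProduct.lid k H) h
    simp only [map_sum, LinearMap.rTensor_tmul, TensorProduct.lid_tmul, one_smul] at h'
    have hz : ∑ l, (Coalgebra.counit (R := k) (M i l) - if i = l then 1 else 0) • x l = 0 := by
      simp only [sub_smul, Finset.sum_sub_distrib, h', ite_smul, one_smul, zero_smul,
        Finset.sum_ite_eq, Finset.mem_univ, if_true, sub_self]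
    have := Fintype.linearIndependent_iff.mp hind _ hz j
    exact sub_eq_zero.mp this
  -- comul of M is M ⊗ M
  have hcomul : ∀ i j : Fin m,
      Coalgebra.comul (R := k) (M i j) = ∑ l, M i l ⊗ₜ[k] M l j := by
    intro i j
    have h := Coalgebra.coassoc_symm_apply (R := k) (x i)
    rw [hM i] at h
    simp only [map_sum, LinearMap.lTensor_tmul, LinearMap.rTensor_tmul] at h
    simp only [hM, TensorProduct.tmul_sum, map_sum, TensorProduct.assoc_symm_tmul] at h
    rw [Finset.sum_comm] at h
    have hz : ∑ l, ((Coalgebra.comul (R := k) (M i l)) - ∑ c, M i c ⊗ₜ[k] M c l) ⊗ₜ[k] x l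
        = 0 := by
      simp only [TensorProduct.sub_tmul, Finset.sum_sub_distrib, TensorProduct.sum_tmul]
      rw [h, sub_self]
    have := hext _ hz j
    rw [sub_eq_zero] at this
    exact this
  -- the antipode relation, entrywise
  have hAM : ∀ i j : Fin m,
      ∑ l, HopfAlgebra.antipode (R := k) (M i l) * M l j = if i = j then 1 else 0 := by
    intro i j
    have h := HopfAlgebra.mul_antipode_rTensor_comul_apply (R := k) (M i j)
    rw [hcomul i j] at h
    simp only [map_sum, LinearMap.rTensor_tmul, LinearMap.mul'_apply] at h
    rw [h, hcounit, apply_ite (algebraMap k H), map_one, map_zero]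
  have h1 : (Matrix.of fun i j => HopfAlgebra.antipode (R := k) (M i j)) * M = 1 := by
    ext i j
    rw [Matrix.mul_apply, Matrix.one_apply]
    simpa using hAM i j
  have h2 : M * (Matrix.of fun i j => HopfAlgebra.antipode (R := k) (M i j)) = 1 :=
    mul_eq_one_comm.mp h1
  refine ⟨h1, h2, ?_⟩
  -- the geometric-series formula
  rcases Nat.eq_zero_or_pos m with hm | hm
  · subst hm
    ext i j
    exact i.elim0
  · set N : Matrix (Fin m) (Fin m) H := M - 1 with hNdef
    have hN : ∀ i j : Fin m, i ≤ j → N i j = 0 := by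
      intro i j hij
      rcases eq_or_lt_of_le hij with h | h
      · subst h
        simp [hNdef, Matrix.sub_apply, hdiag i, Matrix.one_apply]
      · simp [hNdef, Matrix.sub_apply, htri i j h, Matrix.one_apply_ne (ne_of_lt h)]
    have hNpow : ∀ l : ℕ, ∀ i j : Fin m, (i : ℕ) < (j : ℕ) + l → (N ^ l) i j = 0 := by
      intro l
      induction l with
      | zero =>
        intro i j hij
        simp only [pow_zero]
        exact Matrix.one_apply_ne (by omega : i ≠ j)
      | succ n ih =>
        intro i j hij
        rw [pow_succ, Matrix.mul_apply]
        apply Finset.sum_eq_zero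
        intro c _
        rcases le_or_gt c j with hc | hc
        · rw [hN c j hc, mul_zero]
        · rw [ih i c (by omega), zero_mul]
    have hNm : N ^ m = 0 := by
      ext i j
      rw [hNpow m i j (by omega)]
      simp
    have hBsum : (1 : Matrix (Fin m) (Fin m) H) + ∑ l ∈ Finset.Ico 1 m, ((-1 : H) ^ l) • N ^ l
        = ∑ l ∈ Finset.range m, ((-1 : H) ^ l) • N ^ l := by
      rw [Finset.range_eq_Ico, Finset.sum_eq_sum_Ico_succ_bot hm]
      simp
    have hBM : (∑ l ∈ Finset.range m, ((-1 : H) ^ l) • N ^ l) * M = 1 := by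
      have hMN : M = 1 + N := by rw [hNdef]; abel
      rw [hMN, Finset.sum_mul]
      have hterm : ∀ l : ℕ, (((-1 : H) ^ l) • N ^ l) * (1 + N)
          = ((-1 : H) ^ l) • N ^ l - ((-1 : H) ^ (l + 1)) • N ^ (l + 1) := by
        intro l
        rw [Matrix.smul_mul, mul_add, mul_one, smul_add, ← pow_succ, pow_succ (-1 : H) l,
          mul_neg_one, neg_smul, sub_neg_eq_add]
      calc ∑ l ∈ Finset.range m, (((-1 : H) ^ l) • N ^ l) * (1 + N)
          = ∑ l ∈ Finset.range m,
            (((-1 : H) ^ l) • N ^ l - ((-1 : H) ^ (l + 1)) • N ^ (l + 1)) :=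
            Finset.sum_congr rfl fun l _ => hterm l
        _ = ((-1 : H) ^ 0) • N ^ 0 - ((-1 : H) ^ m) • N ^ m := Finset.sum_range_sub' _ m
        _ = 1 := by rw [hNm]; simp
    have hMB : M * (∑ l ∈ Finset.range m, ((-1 : H) ^ l) • N ^ l) = 1 :=
      mul_eq_one_comm.mp hBM
    rw [hBsum]
    calc (Matrix.of fun i j => HopfAlgebra.antipode (R := k) (M i j))
        = (Matrix.of fun i j => HopfAlgebra.antipode (R := k) (M i j)) *
          (M * ∑ l ∈ Finset.range m, ((-1 : H) ^ l) • N ^ l) := by rw [hMB, mul_one]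
      _ = ((Matrix.of fun i j => HopfAlgebra.antipode (R := k) (M i j)) * M) *
          (∑ l ∈ Finset.range m, ((-1 : H) ^ l) • N ^ l) := by rw [mul_assoc]
      _ = ∑ l ∈ Finset.range m, ((-1 : H) ^ l) • N ^ l := by rw [h1, one_mul]
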